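/- If dimension d is a contiguous dimension of an n-dimensional virtual tensor of shape D⃗, then for every fixing of the first d−1 index coordinates, the mapping function f restricted to the remaining coordinates maps the suffix index space {0..D_d−1}×…×{0..D_n−1} bijectively onto a contiguous integer interval of length ∏_{i=d}^{n} D_i. -/

import Mathlib

private lemma ioi_eq_ici {n : ℕ} (d : Fin n) (h : d.val + 1 < n) :
    Finset.Ioi d = Finset.Ici ⟨d.val+1, h⟩ := by
  ext i; simp only [Finset.mem_Ioi, Finset.mem_Ici, Fin.lt_def, Fin.le_def]; omega

private lemma ioi_eq_empty {n : ℕ} (d : Fin n) (h : ¬ d.val + 1 < n) :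
    Finset.Ioi d = ∅ := by
  ext i; simp only [Finset.mem_Ioi, Finset.notMem_empty, iff_false, Fin.lt_def]
  have := i.isLt; omega

private lemma ici_eq_singleton {n : ℕ} (d : Fin n) (h : ¬ d.val + 1 < n) :
    Finset.Ici d = {d} := by
  ext i; simp only [Finset.mem_Ici, Finset.mem_singleton, Fin.le_def, Fin.ext_iff]
  have := i.isLt; have := d.isLt; omega

private lemma mixed_key {n : ℕ} (D : Fin n → ℕ) :
    ∀ m : ℕ, ∀ d : Fin n, n - d.val ≤ m →
      (∀ g : Fin n → ℕ, (∀ i, d ≤ i → g i < D i) →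
        (∑ i ∈ Finset.Ici d, (∏ j ∈ Finset.Ioi i, D j) * g i) < ∏ i ∈ Finset.Ici d, D i)
      ∧ (∀ g g' : Fin n → ℕ, (∀ i, d ≤ i → g i < D i) → (∀ i, d ≤ i → g' i < D i) →
        (∑ i ∈ Finset.Ici d, (∏ j ∈ Finset.Ioi i, D j) * g i)
          = (∑ i ∈ Finset.Ici d, (∏ j ∈ Finset.Ioi i, D j) * g' i) →
        ∀ i, d ≤ i → g i = g' i) := by
  intro m
  induction m with
  | zero => intro d hd; exact absurd hd (by have := d.isLt; omega)
  | succ m ih =>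
    intro d hd
    by_cases h : d.val + 1 < n
    · set d' : Fin n := ⟨d.val + 1, h⟩ with hd'
      have hIci : Finset.Ici d = insert d (Finset.Ici d') := by
        rw [← ioi_eq_ici d h]; exact (Finset.Ioi_insert d).symm
      have hnot : d ∉ Finset.Ici d' := by
        intro hm
        have h0 : d.val + 1 ≤ d.val := Fin.le_def.mp (Finset.mem_Ici.mp hm)
        omega
      have hle : d ≤ d' := Fin.le_def.mpr (show d.val ≤ d.val + 1 by omega)
      have ihd' := ih d' (by simp only [hd']; omega)
      -- helper rewriting of the sum
      have hsum : ∀ g : Fin n → ℕ,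
          (∑ i ∈ Finset.Ici d, (∏ j ∈ Finset.Ioi i, D j) * g i)
            = (∏ i ∈ Finset.Ici d', D i) * g d
              + ∑ i ∈ Finset.Ici d', (∏ j ∈ Finset.Ioi i, D j) * g i := by
        intro g
        rw [hIci, Finset.sum_insert hnot, ioi_eq_ici d h]
      have hprod : (∏ i ∈ Finset.Ici d, D i) = D d * ∏ i ∈ Finset.Ici d', D i := by
        rw [hIci, Finset.prod_insert hnot]
      constructor
      · intro g hg
        have h1 : (∑ i ∈ Finset.Ici d', (∏ j ∈ Finset.Ioi i, D j) * g i)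
            < ∏ i ∈ Finset.Ici d', D i :=
          ihd'.1 g (fun i hi => hg i (le_trans hle hi))
        have h2 : g d < D d := hg d le_rfl
        rw [hsum, hprod]
        calc (∏ i ∈ Finset.Ici d', D i) * g d
              + ∑ i ∈ Finset.Ici d', (∏ j ∈ Finset.Ioi i, D j) * g i
            < (∏ i ∈ Finset.Ici d', D i) * g d + ∏ i ∈ Finset.Ici d', D i := by omega
          _ = (∏ i ∈ Finset.Ici d', D i) * (g d + 1) := by ring
          _ ≤ (∏ i ∈ Finset.Ici d', D i) * D d := by
              exact Nat.mul_le_mul_left _ (by omega)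
          _ = D d * ∏ i ∈ Finset.Ici d', D i := by ring
      · intro g g' hg hg' heq
        have h1 := ihd'.1 g (fun i hi => hg i (le_trans hle hi))
        have h1' := ihd'.1 g' (fun i hi => hg' i (le_trans hle hi))
        rw [hsum, hsum] at heq
        have hMpos : 0 < ∏ i ∈ Finset.Ici d', D i := by
          apply Finset.prod_pos
          intro i hi
          exact Nat.lt_of_le_of_lt (Nat.zero_le _)
            (hg i (le_trans hle (Finset.mem_Ici.mp hi)))
        have hgd : g d = g' d := by
          have e1 : ((∏ i ∈ Finset.Ici d', D i) * g d
              + ∑ i ∈ Finset.Ici d', (∏ j ∈ Finset.Ioi i, D j) * g i)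
                / (∏ i ∈ Finset.Ici d', D i) = g d := by
            rw [Nat.mul_add_div hMpos, Nat.div_eq_of_lt h1, add_zero]
          have e2 : ((∏ i ∈ Finset.Ici d', D i) * g' d
              + ∑ i ∈ Finset.Ici d', (∏ j ∈ Finset.Ioi i, D j) * g' i)
                / (∏ i ∈ Finset.Ici d', D i) = g' d := by
            rw [Nat.mul_add_div hMpos, Nat.div_eq_of_lt h1', add_zero]
          rw [← e1, ← e2, heq]
        have htail : (∑ i ∈ Finset.Ici d', (∏ j ∈ Finset.Ioi i, D j) * g i)
            = ∑ i ∈ Finset.Ici d', (∏ j ∈ Finset.Ioi i, D j) * g' i := by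
          rw [hgd] at heq; omega
        intro i hi
        rcases eq_or_lt_of_le hi with rfl | hlt
        · exact hgd
        · exact ihd'.2 g g' (fun i hi => hg i (le_trans hle hi))
            (fun i hi => hg' i (le_trans hle hi)) htail i
            (by simp only [Fin.le_def, hd']; exact Fin.lt_def.mp hlt)
    · -- d is the last index
      have hI : Finset.Ici d = {d} := ici_eq_singleton d h
      have hO : Finset.Ioi d = ∅ := ioi_eq_empty d h
      constructor
      · intro g hg
        simp only [hI, hO, Finset.sum_singleton, Finset.prod_singleton, Finset.prod_empty,
          one_mul]
        exact hg d le_rfl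
      · intro g g' hg hg' heq i hi
        simp only [hI, hO, Finset.sum_singleton, Finset.prod_empty, one_mul] at heq
        have : i = d := by
          have := i.isLt; have := d.isLt
          exact Fin.ext (by have := Fin.le_def.mp hi; omega)
        rw [this]; exact heq


/-- If dimension d is contiguous, then for every fixing of the first d−1
coordinates, f maps the corresponding suffix index space bijectively onto a
contiguous integer interval of length ∏_{i ≥ d} D i. -/
theorem stmt6 {n : ℕ} (D S : Fin n → ℕ) (b : (Fin n → ℕ) → ℤ) (d : Fin n)
    (hS : ∀ i, d ≤ i → S i = ∏ j ∈ Finset.Ioi i, D j)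
    (hb : ∀ I I' : Fin n → ℕ, (∀ i, i < d → I i = I' i) → b I = b I') :
    ∀ P : Fin n → ℕ, (∀ i, P i < D i) →
      ∃ C : ℤ,
        Set.BijOn (fun I : Fin n → ℕ => (∑ i, (S i : ℤ) * I i) + b I)
          {I | (∀ i, I i < D i) ∧ ∀ i, i < d → I i = P i}
          (Set.Ico C (C + ∏ i ∈ Finset.Ici d, (D i : ℤ))) := by
  intro P hP
  classical
  set N : ℕ := ∏ i ∈ Finset.Ici d, D i with hN
  set T : (Fin n → ℕ) → ℕ := fun I => ∑ i ∈ Finset.Ici d, (∏ j ∈ Finset.Ioi i, D j) * I i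
    with hT
  set C : ℤ := (∑ i ∈ Finset.Iio d, (S i : ℤ) * P i) + b P with hC
  set A : Set (Fin n → ℕ) := {I | (∀ i, I i < D i) ∧ ∀ i, i < d → I i = P i} with hA
  set f : (Fin n → ℕ) → ℤ := fun I => (∑ i, (S i : ℤ) * I i) + b I with hf
  have hcast : (∏ i ∈ Finset.Ici d, (D i : ℤ)) = (N : ℤ) := by
    rw [hN]; push_cast; rfl
  have key := mixed_key D (n - d.val) d le_rfl
  -- the crucial formula for f on A
  have hfa : ∀ I ∈ A, f I = C + (T I : ℤ) := by
    intro I hI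
    obtain ⟨hI1, hI2⟩ := hI
    have hsplit : (∑ i, (S i : ℤ) * I i)
        = (∑ i ∈ Finset.Iio d, (S i : ℤ) * I i) + ∑ i ∈ Finset.Ici d, (S i : ℤ) * I i := by
      rw [← Finset.sum_filter_add_sum_filter_not Finset.univ (· < d)]
      congr 1
      · congr 1; ext i; simp
      · congr 1; ext i; simp [not_lt]
    have h1 : (∑ i ∈ Finset.Iio d, (S i : ℤ) * I i)
        = ∑ i ∈ Finset.Iio d, (S i : ℤ) * P i := by
      apply Finset.sum_congr rfl
      intro i hi
      rw [hI2 i (Finset.mem_Iio.mp hi)]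
    have h2 : (∑ i ∈ Finset.Ici d, (S i : ℤ) * I i) = (T I : ℤ) := by
      rw [hT]
      push_cast
      apply Finset.sum_congr rfl
      intro i hi
      rw [hS i (Finset.mem_Ici.mp hi)]
      push_cast
      ring
    have h3 : b I = b P := hb I P hI2
    simp only [hf, hC]
    rw [hsplit, h1, h2, h3]
    ring
  have hmaps : Set.MapsTo f A (Set.Ico C (C + (N : ℤ))) := by
    intro I hI
    rw [hfa I hI]
    constructor
    · simp
    · have := key.1 I (fun i _ => hI.1 i)
      have : T I < N := this
      omega
  have hinj : Set.InjOn f A := by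
    intro I hI I' hI' heq
    rw [hfa I hI, hfa I' hI'] at heq
    have hTT : T I = T I' := by exact_mod_cast (by omega : (T I : ℤ) = T I')
    funext i
    rcases lt_or_ge i d with hlt | hle
    · rw [hI.2 i hlt, hI'.2 i hlt]
    · exact key.2 I I' (fun i _ => hI.1 i) (fun i _ => hI'.1 i) hTT i hle
  -- finset version of A
  set sFin : Finset (Fin n → ℕ) :=
    Fintype.piFinset (fun i => if i < d then {P i} else Finset.range (D i)) with hsFin
  have hsetA : (↑sFin : Set (Fin n → ℕ)) = A := by
    ext I
    simp only [hsFin, Finset.mem_coe, Fintype.mem_piFinset, hA, Set.mem_setOf_eq]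
    constructor
    · intro h
      constructor
      · intro i
        rcases lt_or_ge i d with hlt | hle
        · have := h i; simp [hlt] at this; rw [this]; exact hP i
        · have := h i; simp [not_lt.mpr hle] at this; exact this
      · intro i hlt
        have := h i; simpa [hlt] using this
    · rintro ⟨h1, h2⟩ i
      rcases lt_or_ge i d with hlt | hle
      · simp [hlt, h2 i hlt]
      · simp [not_lt.mpr hle, h1 i]
  have hcard : sFin.card = N := by
    rw [hsFin, Fintype.card_piFinset]
    have : ∀ i : Fin n, (if i < d then ({P i} : Finset ℕ) else Finset.range (D i)).card
        = if i < d then 1 else D i := by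
      intro i; split <;> simp
    rw [Finset.prod_congr rfl (fun i _ => this i), Finset.prod_ite, Finset.prod_const_one,
      one_mul, hN]
    congr 1
    ext i
    simp [not_lt]
  have hsurj : Set.SurjOn f A (Set.Ico C (C + (N : ℤ))) := by
    intro y hy
    have himg : sFin.image f ⊆ Finset.Ico C (C + (N : ℤ)) := by
      intro z hz
      obtain ⟨I, hI, rfl⟩ := Finset.mem_image.mp hz
      have : I ∈ A := by rw [← hsetA]; exact hI
      have := hmaps this
      simpa [Finset.mem_Ico] using this
    have hcard2 : (Finset.Ico C (C + (N : ℤ))).card = N := by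
      rw [Int.card_Ico]; simp
    have hcard1 : (sFin.image f).card = N := by
      rw [Finset.card_image_of_injOn (by rw [hsetA]; exact hinj), hcard]
    have heqset : sFin.image f = Finset.Ico C (C + (N : ℤ)) :=
      Finset.eq_of_subset_of_card_le himg (by omega)
    have hy' : y ∈ Finset.Ico C (C + (N : ℤ)) := by
      simpa [Finset.mem_Ico] using hy
    rw [← heqset] at hy'
    obtain ⟨I, hI, hIy⟩ := Finset.mem_image.mp hy'
    exact ⟨I, by rw [← hsetA]; exact hI, hIy⟩
  exact ⟨C, by rw [hcast]; exact ⟨hmaps, hinj, hsurj⟩⟩
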